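/- Let S/R be an extension of commutative rings and M a maximal ideal of R. Then the strict closure R* of R in S satisfies R* ⊆ R + MS, where MS is the extension of M to S. -/

import Mathlib

open scoped TensorProduct

/-- The strict closure of `R` in `S`. -/
def strictClosure (R : Type*) [CommRing R] (S : Type*) [CommRing S] [Algebra R S] : Set S :=
  {α : S | α ⊗ₜ[R] (1 : S) = (1 : S) ⊗ₜ[R] α}

/-- Over a field, if `v ⊗ w = w ⊗ v` then `v` and `w` cannot both be outside each other's
spans. -/
lemma key_tensor_lemma {k V : Type*} [Field k] [AddCommGroup V] [Module k V] {v w : V}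
    (h : v ⊗ₜ[k] w = w ⊗ₜ[k] v) (hv : v ∉ Submodule.span k {w})
    (hw : w ∉ Submodule.span k {v}) : False := by
  obtain ⟨f, hf0, hf⟩ := Submodule.exists_dual_map_eq_bot_of_notMem hv inferInstance
  obtain ⟨g, hg0, hg⟩ := Submodule.exists_dual_map_eq_bot_of_notMem hw inferInstance
  have hfw : f w = 0 := by
    have : f w ∈ (Submodule.span k {w}).map f :=
      Submodule.mem_map_of_mem (Submodule.mem_span_singleton_self w)
    rwa [hf, Submodule.mem_bot] at this
  have hgv : g v = 0 := by
    have : g v ∈ (Submodule.span k {v}).map g :=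
      Submodule.mem_map_of_mem (Submodule.mem_span_singleton_self v)
    rwa [hg, Submodule.mem_bot] at this
  have := congrArg (fun x => (TensorProduct.lid k k) (TensorProduct.map f g x)) h
  simp only [TensorProduct.map_tmul, TensorProduct.lid_tmul, hfw, hgv, smul_eq_mul,
    mul_zero, zero_mul] at this
  rcases mul_eq_zero.mp this with h' | h'
  · exact hf0 h'
  · exact hg0 h'

/-- For an extension `S/R` and a maximal ideal `M` of `R`, the strict closure of `R` in `S`
is contained in `R + MS`. -/
theorem strictClosure_subset_add_maximal_smul (R S : Type*) [CommRing R] [CommRing S]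
    [Algebra R S] (hinj : Function.Injective (algebraMap R S))
    (M : Ideal R) (hM : M.IsMaximal) :
    strictClosure R S ⊆
      {s : S | ∃ r : R, ∃ m ∈ Ideal.map (algebraMap R S) M, s = algebraMap R S r + m} := by
  intro α hα
  set I : Ideal S := Ideal.map (algebraMap R S) M with hI
  let k := R ⧸ M
  let V := S ⧸ I
  letI : Field k := Ideal.Quotient.field M
  let q : S →ₐ[R] V := Ideal.Quotient.mkₐ R I
  -- bilinear map S × S → V ⊗[k] V
  let f2 : S →ₗ[R] S →ₗ[R] (V ⊗[k] V) := LinearMap.mk₂ R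
    (fun s t => (q s) ⊗ₜ[k] (q t))
    (fun s s' t => by simp [map_add, TensorProduct.add_tmul])
    (fun r s t => by
      simp only [map_smul, TensorProduct.smul_tmul'])
    (fun s t t' => by simp [map_add, TensorProduct.tmul_add])
    (fun r s t => by
      simp only [map_smul, TensorProduct.tmul_smul])
  have key : (q α) ⊗ₜ[k] (q 1) = (q 1) ⊗ₜ[k] (q α) := by
    have := congrArg (TensorProduct.lift f2) hα
    rw [TensorProduct.lift.tmul, TensorProduct.lift.tmul] at this
    exact this
  -- main case analysis
  have main : q α ∈ Submodule.span k {q 1} := by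
    by_contra hmem
    rcases Classical.em ((q 1 : V) ∈ Submodule.span k {q α}) with h1 | h1
    · obtain ⟨c, hc⟩ := Submodule.mem_span_singleton.mp h1
      rcases eq_or_ne c 0 with rfl | hc0
      · -- q 1 = 0, so I = ⊤ and q α = 0 ∈ span
        rw [zero_smul] at hc
        have h1I : (1 : S) ∈ I := by
          have h0 : Ideal.Quotient.mk I (1 : S) = 0 := hc.symm
          exact Ideal.Quotient.eq_zero_iff_mem.mp h0
        have : q α = 0 := Ideal.Quotient.eq_zero_iff_mem.mpr (I.eq_top_iff_one.mpr h1I ▸ trivial)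
        exact hmem (this ▸ Submodule.zero_mem _)
      · exact hmem (Submodule.mem_span_singleton.mpr ⟨c⁻¹,
          by rw [← hc, smul_smul, inv_mul_cancel₀ hc0, one_smul]⟩)
    · exact key_tensor_lemma key hmem h1
  obtain ⟨c, hc⟩ := Submodule.mem_span_singleton.mp main
  obtain ⟨r, rfl⟩ := Ideal.Quotient.mk_surjective c
  have : q α = q (algebraMap R S r) := by
    rw [← hc]
    have : (Ideal.Quotient.mk M r : k) • (q 1 : V) =
        Ideal.Quotient.mk I (algebraMap R S r * 1) :=
      Ideal.Quotient.mk_smul_mk_quotient_map_quotient r 1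
    rw [this, mul_one]
    rfl
  have hmem : α - algebraMap R S r ∈ I := by
    rw [← Ideal.Quotient.eq_zero_iff_mem]
    have : Ideal.Quotient.mk I α = Ideal.Quotient.mk I (algebraMap R S r) := this
    rw [map_sub, this, sub_self]
  exact ⟨r, α - algebraMap R S r, hmem, by ring⟩
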